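/- arXiv:2312.16696 — 2 statements merged into one kernel-verified Lean document; each statement's English description precedes it below -/
import Mathlib

section
/- For N ≥ 3 and c_N = Γ(N/2)/(2(N-2)π^{N/2}), the L^q norm of the function G(x) = c_N(|x|^{2-N} - 1) over the unit ball B_1 ⊂ ℝ^N satisfies ‖G‖_{L^q(B_1)}^q = c_N^q · π^{N/2} Γ(q+1) Γ(2/(N-2) - q + 1) / ( Γ(N/2 + 1) Γ(N/(N-2)) ), for any real q with 1 ≤ q < N/(N-2). -/
open MeasureTheory Real Set

lemma real_beta {a b : ℝ} (ha : 0 < a) (hb : 0 < b) :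
    ∫ x in Ioo (0:ℝ) 1, x ^ (a - 1) * (1 - x) ^ (b - 1) =
      Real.Gamma a * Real.Gamma b / Real.Gamma (a + b) := by
  have hab : (0:ℝ) < a + b := by linarith
  have hbeta : Complex.betaIntegral a b
      = ((∫ x in (0:ℝ)..1, x ^ (a - 1) * (1 - x) ^ (b - 1) : ℝ) : ℂ) := by
    rw [Complex.betaIntegral, ← intervalIntegral.integral_ofReal]
    refine intervalIntegral.integral_congr fun x hx => ?_
    rw [uIcc_of_le zero_le_one] at hx
    rw [Complex.ofReal_mul, Complex.ofReal_cpow hx.1, Complex.ofReal_cpow (by linarith [hx.2])]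
    push_cast
    ring
  have hC := Complex.Gamma_mul_Gamma_eq_betaIntegral (s := (a:ℂ)) (t := (b:ℂ))
    (by simpa using ha) (by simpa using hb)
  rw [hbeta, ← Complex.ofReal_add, Complex.Gamma_ofReal, Complex.Gamma_ofReal,
    Complex.Gamma_ofReal, ← Complex.ofReal_mul, ← Complex.ofReal_mul] at hC
  have h2 : Real.Gamma a * Real.Gamma b
      = Real.Gamma (a + b) * ∫ x in (0:ℝ)..1, x ^ (a - 1) * (1 - x) ^ (b - 1) := by
    exact_mod_cast hC
  rw [intervalIntegral.integral_of_le zero_le_one, MeasureTheory.integral_Ioc_eq_integral_Ioo] at h2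
  rw [h2]
  field_simp [(Real.Gamma_pos_of_pos hab).ne']

/-- for N ≥ 3, c_N = Γ(N/2)/(2(N-2)π^{N/2}) and G(x) = c_N(|x|^{2-N} - 1),
one has ‖G‖_{L^q(B_1)}^q = c_N^q · π^{N/2} Γ(q+1) Γ(2/(N-2) - q + 1) /
( Γ(N/2 + 1) Γ(N/(N-2)) ) for 1 ≤ q < N/(N-2). -/
theorem green_ball_Lq_norm (N : ℕ) (hN : 3 ≤ N) (q : ℝ) (hq1 : 1 ≤ q)
    (hq2 : q < (N : ℝ) / ((N : ℝ) - 2)) :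
    (∫ x in Metric.ball (0 : EuclideanSpace ℝ (Fin N)) 1,
        |Real.Gamma ((N : ℝ) / 2) / (2 * ((N : ℝ) - 2) * π ^ ((N : ℝ) / 2)) *
          (‖x‖ ^ ((2 : ℝ) - (N : ℝ)) - 1)| ^ q)
      = (Real.Gamma ((N : ℝ) / 2) / (2 * ((N : ℝ) - 2) * π ^ ((N : ℝ) / 2))) ^ q *
          π ^ ((N : ℝ) / 2) * Real.Gamma (q + 1) * Real.Gamma (2 / ((N : ℝ) - 2) - q + 1) /
          (Real.Gamma ((N : ℝ) / 2 + 1) * Real.Gamma ((N : ℝ) / ((N : ℝ) - 2))) := by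
  have hN3 : (3:ℝ) ≤ (N:ℝ) := by exact_mod_cast hN
  have hN2 : (0:ℝ) < (N:ℝ) - 2 := by linarith
  have hπ : (0:ℝ) < π ^ ((N:ℝ)/2) := Real.rpow_pos_of_pos Real.pi_pos _
  set c : ℝ := Real.Gamma ((N : ℝ) / 2) / (2 * ((N : ℝ) - 2) * π ^ ((N : ℝ) / 2)) with hc
  have hc_pos : 0 < c := by
    apply div_pos (Real.Gamma_pos_of_pos (by linarith)) (by positivity)
  set A : ℝ := (N:ℝ)/((N:ℝ)-2) - q with hA
  have hA_pos : 0 < A := by rw [hA]; linarith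
  set F : ℝ → ℝ := fun y => |c * (y ^ ((2:ℝ)-(N:ℝ)) - 1)| ^ q with hF
  haveI : Nonempty (Fin N) := ⟨⟨0, by omega⟩⟩
  -- Step 1: polar coordinates
  have h1 : (∫ x in Metric.ball (0 : EuclideanSpace ℝ (Fin N)) 1,
        |c * (‖x‖ ^ ((2:ℝ)-(N:ℝ)) - 1)| ^ q)
      = (N:ℝ) * (volume (Metric.ball (0 : EuclideanSpace ℝ (Fin N)) 1)).toReal *
          ∫ y in Ioi (0:ℝ), y ^ (N - 1) • (Set.Iio (1:ℝ)).indicator F y := by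
    rw [← MeasureTheory.integral_indicator measurableSet_ball]
    have heq : ∀ x : EuclideanSpace ℝ (Fin N),
        (Metric.ball (0 : EuclideanSpace ℝ (Fin N)) 1).indicator
          (fun x => |c * (‖x‖ ^ ((2:ℝ)-(N:ℝ)) - 1)| ^ q) x
        = (Set.Iio (1:ℝ)).indicator F ‖x‖ := by
      intro x
      by_cases hx : ‖x‖ < 1 <;>
        simp [Set.indicator_apply, mem_ball_zero_iff, Set.mem_Iio, hx, hF]
    simp_rw [heq]
    rw [MeasureTheory.integral_fun_norm_addHaar volume ((Set.Iio (1:ℝ)).indicator F)]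
    simp only [finrank_euclideanSpace_fin, nsmul_eq_mul, smul_eq_mul]
    rw [measureReal_def]
    ring
  -- Step 2: reduce to Ioo 0 1
  have h2 : ∫ y in Ioi (0:ℝ), y ^ (N - 1) • (Set.Iio (1:ℝ)).indicator F y
      = ∫ y in Ioo (0:ℝ) 1, y ^ (N - 1) * F y := by
    have : ∀ y : ℝ, y ^ (N-1) • (Set.Iio (1:ℝ)).indicator F y
        = (Set.Iio (1:ℝ)).indicator (fun y => y ^ (N-1) * F y) y := by
      intro y
      by_cases hy : y ∈ Set.Iio (1:ℝ) <;>
        simp [Set.indicator_of_mem, Set.indicator_of_notMem, hy]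
    simp_rw [this]
    rw [MeasureTheory.setIntegral_indicator measurableSet_Iio, Set.Ioi_inter_Iio]
  -- Step 3: pointwise rewrite on Ioo 0 1
  have h3 : ∫ y in Ioo (0:ℝ) 1, y ^ (N - 1) * F y
      = c ^ q * ∫ y in Ioo (0:ℝ) 1,
          y ^ ((N:ℝ) - 1 + (2 - (N:ℝ)) * q) * (1 - y ^ ((N:ℝ)-2)) ^ q := by
    rw [← MeasureTheory.integral_const_mul]
    refine MeasureTheory.setIntegral_congr_fun measurableSet_Ioo fun y hy => ?_
    obtain ⟨hy0, hy1⟩ := hy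
    have ht : 1 < y ^ ((2:ℝ)-(N:ℝ)) :=
      (Real.one_lt_rpow_iff_of_pos hy0).2 (Or.inr ⟨hy1, by linarith⟩)
    have hsplit : y ^ ((2:ℝ)-(N:ℝ)) - 1 = y ^ ((2:ℝ)-(N:ℝ)) * (1 - y ^ ((N:ℝ)-2)) := by
      rw [mul_sub, mul_one, ← Real.rpow_add hy0,
        show (2-(N:ℝ)) + ((N:ℝ)-2) = 0 by ring, Real.rpow_zero]
    have hy2 : y ^ ((N:ℝ)-2) ≤ 1 := Real.rpow_le_one hy0.le hy1.le (by linarith)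
    rw [hF]
    simp only
    rw [abs_of_pos (mul_pos hc_pos (by linarith)),
      Real.mul_rpow hc_pos.le (by linarith), hsplit,
      Real.mul_rpow (Real.rpow_nonneg hy0.le _) (by linarith),
      ← Real.rpow_natCast y (N-1), ← Real.rpow_mul hy0.le,
      Nat.cast_sub (by omega), Nat.cast_one]
    rw [mul_comm (c ^ q), mul_assoc, ← mul_assoc (y ^ ((N:ℝ)-1)), ← Real.rpow_add hy0]
    ring
  -- Step 4: substitution u = y^(N-2)
  have h4 : ∫ y in Ioo (0:ℝ) 1, y ^ ((N:ℝ) - 1 + (2 - (N:ℝ)) * q) * (1 - y ^ ((N:ℝ)-2)) ^ q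
      = ((N:ℝ)-2)⁻¹ * ∫ u in Ioo (0:ℝ) 1, u ^ (A - 1) * (1 - u) ^ ((q+1) - 1) := by
    set g : ℝ → ℝ := (Set.Iio (1:ℝ)).indicator (fun u => u ^ (A - 1) * (1 - u) ^ ((q+1) - 1))
      with hg
    have hsub := MeasureTheory.integral_comp_rpow_Ioi g (p := (N:ℝ)-2) hN2.ne'
    have hrhs : ∫ u in Ioi (0:ℝ), g u
        = ∫ u in Ioo (0:ℝ) 1, u ^ (A - 1) * (1 - u) ^ ((q+1) - 1) := by
      rw [hg, MeasureTheory.setIntegral_indicator measurableSet_Iio, Set.Ioi_inter_Iio]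
    have hexp : (N:ℝ)-2-1 + ((N:ℝ)-2)*(A-1) = (N:ℝ)-1+(2-(N:ℝ))*q := by
      rw [hA]; field_simp; ring
    have hlhs : (∫ x in Ioi (0:ℝ), (|(N:ℝ)-2| * x ^ ((N:ℝ)-2 - 1)) • g (x ^ ((N:ℝ)-2)))
        = ((N:ℝ)-2) * ∫ y in Ioo (0:ℝ) 1,
            y ^ ((N:ℝ) - 1 + (2 - (N:ℝ)) * q) * (1 - y ^ ((N:ℝ)-2)) ^ q := by
      have hpt : ∀ x ∈ Ioi (0:ℝ),
          (|(N:ℝ)-2| * x ^ ((N:ℝ)-2-1)) • g (x ^ ((N:ℝ)-2))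
          = (Set.Iio (1:ℝ)).indicator
              (fun x => ((N:ℝ)-2) * (x ^ ((N:ℝ)-1+(2-(N:ℝ))*q) * (1 - x ^ ((N:ℝ)-2)) ^ q)) x := by
        intro x hx
        have hx0 : (0:ℝ) < x := hx
        by_cases hx1 : x < 1
        · have hlt : x ^ ((N:ℝ)-2) ∈ Set.Iio (1:ℝ) := Real.rpow_lt_one hx0.le hx1 hN2
          rw [hg, Set.indicator_of_mem hlt, Set.indicator_of_mem (show x ∈ Set.Iio 1 from hx1)]
          simp only [smul_eq_mul]
          rw [abs_of_pos hN2, ← Real.rpow_mul hx0.le, show q+1-1 = q by ring,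
            ← hexp, Real.rpow_add hx0]
          ring
        · have hge : x ^ ((N:ℝ)-2) ∉ Set.Iio (1:ℝ) := by
            simp only [Set.mem_Iio, not_lt]
            exact Real.one_le_rpow (not_lt.1 hx1) hN2.le
          rw [hg, Set.indicator_of_notMem hge,
            Set.indicator_of_notMem (show x ∉ Set.Iio 1 from hx1)]
          simp
      rw [MeasureTheory.setIntegral_congr_fun measurableSet_Ioi hpt,
        MeasureTheory.setIntegral_indicator measurableSet_Iio, Set.Ioi_inter_Iio,
        MeasureTheory.integral_const_mul]
    have key : ((N:ℝ)-2) * (∫ y in Ioo (0:ℝ) 1,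
          y ^ ((N:ℝ) - 1 + (2 - (N:ℝ)) * q) * (1 - y ^ ((N:ℝ)-2)) ^ q)
        = ∫ u in Ioo (0:ℝ) 1, u ^ (A - 1) * (1 - u) ^ ((q+1) - 1) := by
      rw [← hlhs, hsub, hrhs]
    rw [← key, inv_mul_cancel_left₀ hN2.ne']
  -- Step 5: final assembly
  have hV : (volume (Metric.ball (0 : EuclideanSpace ℝ (Fin N)) 1)).toReal
      = π ^ ((N:ℝ)/2) / Real.Gamma ((N:ℝ)/2 + 1) := by
    rw [EuclideanSpace.volume_ball]
    simp only [Fintype.card_fin, ENNReal.ofReal_one, one_pow, one_mul]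
    rw [ENNReal.toReal_ofReal (by positivity)]
    congr 1
    rw [Real.sqrt_eq_rpow, ← Real.rpow_natCast (π ^ ((1:ℝ)/2)) N, ← Real.rpow_mul Real.pi_pos.le]
    ring_nf
  have hbeta := real_beta hA_pos (show (0:ℝ) < q + 1 by linarith)
  have hAq : A + (q + 1) = (N:ℝ)/((N:ℝ)-2) + 1 := by rw [hA]; ring
  have hA' : 2 / ((N:ℝ)-2) - q + 1 = A := by rw [hA]; field_simp; ring
  rw [h1, h2, h3, h4, hbeta, hAq, hV, hA',
    Real.Gamma_add_one (by positivity : (N:ℝ)/((N:ℝ)-2) ≠ 0)]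
  have hG1 : Real.Gamma ((N:ℝ)/2 + 1) ≠ 0 := (Real.Gamma_pos_of_pos (by linarith)).ne'
  have hG2 : Real.Gamma ((N:ℝ)/((N:ℝ)-2)) ≠ 0 :=
    (Real.Gamma_pos_of_pos (by positivity)).ne'
  have hN0 : (N:ℝ) ≠ 0 := by linarith
  field_simp
end

section
/- Let X be a real normed space, E : X → (-∞, ∞] convex, G : X → ℝ convex and continuous, and suppose u ∈ X satisfies E(u) = min{E(v) : v ∈ X, G(v) = 1} with G(u) = 1. Assume there exists ũ ∈ X with E(u + ũ) < E(u), G(u + ũ) < 1, and E(u - ũ) < ∞. Then every subgradient of G at u lies in ⋃_{t ≥ 0} t·∂E(u), i.e., ∂G(u) ⊆ ⋃_{t≥0} t ∂E(u), where ∂F(w) = {f ∈ X* : F(v) ≥ F(w) + f(v - w) for all v ∈ X} denotes the convex subdifferential. -/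
open Set

/-- nonsmooth Lagrange multiplier rule. X is a real normed space,
E : X → (-∞,∞] convex, G : X → ℝ convex and continuous, u a minimizer of E on {G = 1},
and ũ satisfies E(u+ũ) < E(u), G(u+ũ) < 1, E(u-ũ) < ∞. Then every subgradient of G at u
is a nonnegative multiple of a subgradient of E at u: ∂G(u) ⊆ ⋃_{t≥0} t ∂E(u). -/
theorem nonsmooth_lagrange_multiplier (X : Type*) [NormedAddCommGroup X] [NormedSpace ℝ X]
    (E : X → EReal) (hEbot : ∀ x, E x ≠ ⊥)
    (hEconv : ∀ x y : X, ∀ a b : ℝ, 0 ≤ a → 0 ≤ b → a + b = 1 →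
      E (a • x + b • y) ≤ (a : EReal) * E x + (b : EReal) * E y)
    (G : X → ℝ) (hGconv : ConvexOn ℝ Set.univ G) (hGcont : Continuous G)
    (u : X) (hGu : G u = 1)
    (hmin : ∀ v : X, G v = 1 → E u ≤ E v)
    (ut : X) (h1 : E (u + ut) < E u) (h2 : G (u + ut) < 1) (h3 : E (u - ut) < ⊤) :
    ∀ f : X →L[ℝ] ℝ, (∀ v : X, (G u : ℝ) + f (v - u) ≤ G v) →
      ∃ t : ℝ, 0 ≤ t ∧ ∃ g : X →L[ℝ] ℝ,
        (∀ v : X, E u + ((g (v - u) : ℝ) : EReal) ≤ E v) ∧ f = t • g := by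
  intro f hf
  have hfU : ∀ v : X, (1 : ℝ) + f (v - u) ≤ G v := by
    intro v; have := hf v; rwa [hGu] at this
  have hfut : f ut < 0 := by
    have h := hfU (u + ut)
    rw [add_sub_cancel_left] at h
    linarith
  -- real representatives
  have hAne : E (u + ut) ≠ ⊤ := (h1.trans_le le_top).ne
  obtain ⟨a0, hA⟩ : ∃ a : ℝ, E (u + ut) = (a : EReal) :=
    ⟨_, (EReal.coe_toReal hAne (hEbot _)).symm⟩
  obtain ⟨b0, hB⟩ : ∃ b : ℝ, E (u - ut) = (b : EReal) :=
    ⟨_, (EReal.coe_toReal h3.ne (hEbot _)).symm⟩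
  -- midpoint bound : E u ≤ a0/2 + b0/2
  have hmid : E u ≤ ((2⁻¹ * a0 + 2⁻¹ * b0 : ℝ) : EReal) := by
    have h := hEconv (u + ut) (u - ut) 2⁻¹ 2⁻¹ (by norm_num) (by norm_num) (by norm_num)
    have huu : (2⁻¹ : ℝ) • (u + ut) + (2⁻¹ : ℝ) • (u - ut) = u := by module
    rw [huu, hA, hB, ← EReal.coe_mul, ← EReal.coe_mul, ← EReal.coe_add] at h
    exact h
  have hEuTop : E u ≠ ⊤ := by
    intro hT
    rw [hT] at hmid
    exact absurd hmid (not_le.mpr (EReal.coe_lt_top _))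
  obtain ⟨e0, hE⟩ : ∃ e : ℝ, E u = (e : EReal) :=
    ⟨_, (EReal.coe_toReal hEuTop (hEbot _)).symm⟩
  have ha0 : a0 < e0 := by rw [hA, hE] at h1; exact_mod_cast h1
  have hb0 : e0 < b0 := by
    rw [hE] at hmid
    have : e0 ≤ 2⁻¹ * a0 + 2⁻¹ * b0 := by exact_mod_cast hmid
    linarith
  -- convexity in real form
  have combo : ∀ (v1 v2 : X) (c1 c2 a : ℝ), E v1 = (c1 : EReal) → E v2 = (c2 : EReal) →
      0 ≤ a → a ≤ 1 → E ((1 - a) • v1 + a • v2) ≤ (((1 - a) * c1 + a * c2 : ℝ) : EReal) := by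
    intro v1 v2 c1 c2 a hC1 hC2 ha0' ha1
    have h := hEconv v1 v2 (1 - a) a (by linarith) ha0' (by ring)
    rw [hC1, hC2, ← EReal.coe_mul, ← EReal.coe_mul, ← EReal.coe_add] at h
    exact h
  -- core lemma : f (w - u) = 0 → E u ≤ E w
  have core : ∀ w : X, f (w - u) = 0 → E u ≤ E w := by
    intro w hw
    have hGw : 1 ≤ G w := by have := hfU w; linarith
    rcases eq_or_lt_of_le hGw with heq | hlt
    · exact hmin w heq.symm
    · by_contra hcon
      push_neg at hcon
      have hwne : E w ≠ ⊤ := (hcon.trans_le le_top).ne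
      obtain ⟨c0, hC⟩ : ∃ c : ℝ, E w = (c : EReal) :=
        ⟨_, (EReal.coe_toReal hwne (hEbot _)).symm⟩
      have hc0 : c0 < e0 := by rw [hC, hE] at hcon; exact_mod_cast hcon
      -- intermediate value
      have hcont : Continuous fun s : ℝ => G ((1 - s) • (u + ut) + s • w) := by
        apply hGcont.comp
        exact ((continuous_const.sub continuous_id).smul continuous_const).add
          (continuous_id.smul continuous_const)
      have hiv := intermediate_value_Icc (by norm_num : (0 : ℝ) ≤ 1) hcont.continuousOn
      have h1mem : (1 : ℝ) ∈ Icc (G ((1 - (0:ℝ)) • (u + ut) + (0:ℝ) • w))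
          (G ((1 - (1:ℝ)) • (u + ut) + (1:ℝ) • w)) := by
        simp only [sub_zero, one_smul, zero_smul, add_zero, sub_self, zero_add]
        exact ⟨h2.le, hlt.le⟩
      obtain ⟨s, hsIcc, hGs⟩ := hiv h1mem
      have hs0 : s ≠ 0 := by
        intro h; rw [h] at hGs; simp at hGs; rw [hGs] at h2; exact absurd h2 (lt_irrefl _)
      have hs1 : s ≠ 1 := by
        intro h; rw [h] at hGs; simp at hGs; rw [hGs] at hlt; exact absurd hlt (lt_irrefl _)
      have hspos : 0 < s := lt_of_le_of_ne hsIcc.1 (Ne.symm hs0)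
      have hslt : s < 1 := lt_of_le_of_ne hsIcc.2 hs1
      have hEw := hmin _ hGs
      have hcomb := combo (u + ut) w a0 c0 s hA hC hspos.le hslt.le
      have := hEw.trans hcomb
      rw [hE] at this
      have hreal : e0 ≤ (1 - s) * a0 + s * c0 := by exact_mod_cast this
      nlinarith
  -- combined : e0 ≤ combination when f vanishes
  have core' : ∀ (v1 v2 : X) (c1 c2 a : ℝ), E v1 = (c1 : EReal) → E v2 = (c2 : EReal) →
      0 ≤ a → a ≤ 1 → f (((1 - a) • v1 + a • v2) - u) = 0 →
      e0 ≤ (1 - a) * c1 + a * c2 := by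
    intro v1 v2 c1 c2 a hC1 hC2 ha' ha1' hf0
    have h := (core _ hf0).trans (combo v1 v2 c1 c2 a hC1 hC2 ha' ha1')
    rw [hE] at h
    exact_mod_cast h
  have hsplit : ∀ (v : X) (a : ℝ), ((1 - a) • v + a • (u + ut)) - u
      = (1 - a) • (v - u) + a • ut := by
    intro v a
    module
  -- Lemma B : E v ≤ E u → f (v - u) ≤ 0
  have lemB : ∀ v : X, E v ≤ E u → f (v - u) ≤ 0 := by
    intro v hv
    by_contra hpos
    push_neg at hpos
    have hvne : E v ≠ ⊤ := by
      intro hT; rw [hT, hE] at hv; exact absurd hv (by simp)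
    obtain ⟨c0, hC⟩ : ∃ c : ℝ, E v = (c : EReal) :=
      ⟨_, (EReal.coe_toReal hvne (hEbot _)).symm⟩
    have hc0 : c0 ≤ e0 := by rw [hC, hE] at hv; exact_mod_cast hv
    set x := f (v - u) with hx
    set y := f ut with hy
    set l := x / (x - y) with hl
    have hxy : 0 < x - y := by simp only [hx, hy]; linarith
    have hl0 : 0 < l := div_pos hpos hxy
    have hl1 : l < 1 := (div_lt_one hxy).mpr (by simp only [hx, hy]; linarith)
    have hzero : f (((1 - l) • v + l • (u + ut)) - u) = 0 := by
      rw [hsplit v l, map_add, map_smul, map_smul, smul_eq_mul, smul_eq_mul, ← hx, ← hy, hl]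
      field_simp
      ring
    have hkey := core' v (u + ut) c0 a0 l hC hA hl0.le hl1.le hzero
    nlinarith
  -- Lemma C : ratio comparison
  have lemC : ∀ (v1 v2 : X) (c1 c2 : ℝ), E v1 = (c1 : EReal) → E v2 = (c2 : EReal) →
      c1 < e0 → e0 < c2 → f (v2 - u) / (c2 - e0) ≤ (-f (v1 - u)) / (e0 - c1) := by
    intro v1 v2 c1 c2 hC1 hC2 hc1 hc2
    have hx1 : f (v1 - u) < 0 := by
      have hle : E v1 ≤ E u := by rw [hC1, hE]; exact_mod_cast hc1.le
      rcases lt_or_eq_of_le (lemB v1 hle) with h | h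
      · exact h
      · exfalso
        have := core v1 h
        rw [hC1, hE] at this
        have : e0 ≤ c1 := by exact_mod_cast this
        linarith
    rcases le_or_gt (f (v2 - u)) 0 with hx2 | hx2
    · have hL : f (v2 - u) / (c2 - e0) ≤ 0 := div_nonpos_iff.mpr (Or.inr ⟨hx2, by linarith⟩)
      have hR : 0 < (-f (v1 - u)) / (e0 - c1) := div_pos (by linarith) (by linarith)
      linarith
    · set x1 := -f (v1 - u) with hx1d
      set x2 := f (v2 - u) with hx2d
      have hx1p : 0 < x1 := by simp only [hx1d]; linarith
      have hx12 : 0 < x1 + x2 := by linarith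
      set l := x1 / (x1 + x2) with hl
      have hl0 : 0 < l := div_pos hx1p hx12
      have hl1 : l < 1 := (div_lt_one hx12).mpr (by linarith)
      have hzero : f (((1 - l) • v1 + l • v2) - u) = 0 := by
        have hsp : ((1 - l) • v1 + l • v2) - u = (1 - l) • (v1 - u) + l • (v2 - u) := by
          rw [smul_sub, smul_sub]
          rw [show ((1 - l) • v1 - (1 - l) • u + (l • v2 - l • u))
              = (1 - l) • v1 + l • v2 - ((1 - l) + l) • u by rw [add_smul]; abel]
          norm_num
        rw [hsp, map_add, map_smul, map_smul, smul_eq_mul, smul_eq_mul,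
          show f (v1 - u) = -x1 by rw [hx1d]; ring, ← hx2d, hl]
        field_simp
        ring
      have hkey := core' v1 v2 c1 c2 l hC1 hC2 hl0.le hl1.le hzero
      rw [div_le_div_iff₀ (by linarith) (by linarith)]
      rw [hl] at hkey
      have hkey2 : e0 * (x1 + x2) ≤ x2 * c1 + x1 * c2 := by
        have h' : (1 - x1 / (x1 + x2)) = x2 / (x1 + x2) := by field_simp; ring
        rw [h', div_mul_eq_mul_div, div_mul_eq_mul_div, ← add_div,
          le_div_iff₀ hx12] at hkey
        linarith
      nlinarith
  -- the multiplier
  set S : Set ℝ :=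
    {r | ∃ (v : X) (c : ℝ), E v = (c : EReal) ∧ e0 < c ∧ r = f (v - u) / (c - e0)} with hSdef
  have hmemB : (-f ut) / (b0 - e0) ∈ S := by
    refine ⟨u - ut, b0, hB, hb0, ?_⟩
    rw [show u - ut - u = -ut by abel, map_neg]
  have hSne : S.Nonempty := ⟨_, hmemB⟩
  have hSbdd : BddAbove S := by
    refine ⟨(-f ut) / (e0 - a0), ?_⟩
    rintro r ⟨v, c, hC, hc, rfl⟩
    have := lemC (u + ut) v a0 c hA hC ha0 hc
    rwa [add_sub_cancel_left] at this
  set t := sSup S with ht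
  have ht0 : 0 < (-f ut) / (b0 - e0) := div_pos (by linarith) (by linarith)
  have ht_pos : 0 < t := lt_of_lt_of_le ht0 (le_csSup hSbdd hmemB)
  refine ⟨t, ht_pos.le, t⁻¹ • f, ?_, ?_⟩
  · intro v
    rcases eq_or_ne (E v) ⊤ with hv | hv
    · rw [hv]; exact le_top
    obtain ⟨c, hC⟩ : ∃ c : ℝ, E v = (c : EReal) :=
      ⟨_, (EReal.coe_toReal hv (hEbot _)).symm⟩
    have key : f (v - u) ≤ t * (c - e0) := by
      rcases lt_trichotomy c e0 with h | h | h
      · have hub : t ≤ (-f (v - u)) / (e0 - c) := by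
          refine csSup_le hSne ?_
          rintro r ⟨v2, c2, hC2, hc2, rfl⟩
          exact lemC v v2 c c2 hC hC2 h hc2
        rw [le_div_iff₀ (by linarith)] at hub
        nlinarith
      · have := lemB v (by rw [hC, hE, h])
        have ht' : t * (c - e0) = 0 := by rw [h]; ring
        linarith [ht' ▸ this]
      · have hrS : f (v - u) / (c - e0) ∈ S := ⟨v, c, hC, h, rfl⟩
        have := le_csSup hSbdd hrS
        rw [div_le_iff₀ (by linarith)] at this
        nlinarith
    have hreal : (e0 + t⁻¹ * f (v - u) : ℝ) ≤ c := by
      have h2 : t⁻¹ * f (v - u) ≤ c - e0 := by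
        rw [inv_mul_eq_div, div_le_iff₀ ht_pos]
        nlinarith
      linarith
    rw [hE, hC]
    have happ : ((t⁻¹ • f) (v - u) : ℝ) = t⁻¹ * f (v - u) := by
      simp [ContinuousLinearMap.smul_apply, smul_eq_mul]
    rw [happ, ← EReal.coe_add]
    exact_mod_cast hreal
  · rw [smul_smul, mul_inv_cancel₀ ht_pos.ne', one_smul]
end
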